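/- For all integers n and t with 0 < t < n − 1, the single-exclusion number satisfies the lower bound S(n,t) ≥ binom(n, t+1) / (n − t − t/n + 1/2), where binom(n,t+1) denotes the binomial coefficient. -/

import Mathlib

/-- An `(n,t)`-single-exclusion system: a collection of `t`-subsets (blocks) of an
`n`-set such that every subset `X` with `1 ≤ |X| ≤ t+1` has a block containing all
but exactly one element of `X`. -/
def IsSESystem (n t : ℕ) (S : Finset (Finset (Fin n))) : Prop :=
  (∀ B ∈ S, B.card = t) ∧
  ∀ X : Finset (Fin n), 1 ≤ X.card → X.card ≤ t + 1 → ∃ B ∈ S, (X \ B).card = 1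

/-- The `(n,t)`-single-exclusion number `S(n,t)`: the least number of blocks in an
`(n,t)`-single-exclusion system. -/
noncomputable def SENumber (n t : ℕ) : ℕ :=
  sInf {m : ℕ | ∃ S : Finset (Finset (Fin n)), IsSESystem n t S ∧ S.card = m}

/-- The family of all `t`-subsets is an SE system (existence). -/
lemma exists_SESystem (n t : ℕ) (ht : 0 < t) (htn : t + 1 < n) :
    ∃ S : Finset (Finset (Fin n)), IsSESystem n t S := by
  refine ⟨Finset.powersetCard t Finset.univ, ?_, ?_⟩
  · intro B hB
    exact (Finset.mem_powersetCard.mp hB).2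
  · intro X hX1 hX2
    obtain ⟨x, hx⟩ := Finset.card_pos.mp hX1
    have hsub : X.erase x ⊆ Finset.univ.erase x := by
      intro y hy
      simp [Finset.mem_erase.mp hy]
    have hc1 : (X.erase x).card ≤ t := by
      have := Finset.card_erase_of_mem hx
      omega
    have hc2 : t ≤ (Finset.univ.erase x).card := by
      rw [Finset.card_erase_of_mem (Finset.mem_univ x), Finset.card_univ, Fintype.card_fin]
      omega
    obtain ⟨B, hB1, hB2, hB3⟩ := Finset.exists_subsuperset_card_eq hsub hc1 hc2
    refine ⟨B, Finset.mem_powersetCard.mpr ⟨Finset.subset_univ B, hB3⟩, ?_⟩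
    have hxB : x ∉ B := fun h => (Finset.mem_erase.mp (hB2 h)).1 rfl
    have : X \ B = {x} := by
      ext y
      simp only [Finset.mem_sdiff, Finset.mem_singleton]
      constructor
      · rintro ⟨hyX, hyB⟩
        by_contra hne
        exact hyB (hB1 (Finset.mem_erase.mpr ⟨hne, hyX⟩))
      · rintro rfl; exact ⟨hx, hxB⟩
    rw [this, Finset.card_singleton]

/-- The key counting inequality for any SE system. -/
lemma key_count (n t : ℕ) (ht : 0 < t) (htn : t + 1 < n)
    (S : Finset (Finset (Fin n))) (hS : IsSESystem n t S) :
    S.card + 2 * n.choose (t + 1) ≤ 2 * S.card * (n - t) := by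
  classical
  set T : Finset (Finset (Fin n)) := Finset.powersetCard (t + 1) Finset.univ with hT
  -- degree of a (t+1)-set
  set deg : Finset (Fin n) → ℕ := fun X => (S.filter (fun B => B ⊆ X)).card with hdeg
  have hTcard : T.card = n.choose (t + 1) := by
    rw [hT, Finset.card_powersetCard, Finset.card_univ, Fintype.card_fin]
  -- every X in T is covered, i.e. deg X ≥ 1, and coverage is by subsets
  have hsub_of : ∀ X ∈ T, ∀ B ∈ S, (X \ B).card = 1 → B ⊆ X := by
    intro X hX B hB h1
    have hXc : X.card = t + 1 := (Finset.mem_powersetCard.mp hX).2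
    have hBc : B.card = t := hS.1 B hB
    have h2 := Finset.card_sdiff_add_card_inter X B
    have h3 : (X ∩ B).card = t := by omega
    have h4 : X ∩ B = B := Finset.eq_of_subset_of_card_le (Finset.inter_subset_right)
      (by omega)
    exact Finset.inter_eq_right.mp h4
  have hdeg1 : ∀ X ∈ T, 1 ≤ deg X := by
    intro X hX
    have hXc : X.card = t + 1 := (Finset.mem_powersetCard.mp hX).2
    obtain ⟨B, hB, h1⟩ := hS.2 X (by omega) (by omega)
    rw [hdeg]
    exact Finset.card_pos.mpr ⟨B, Finset.mem_filter.mpr ⟨hB, hsub_of X hX B hB h1⟩⟩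
  -- total degree is at most |S| * (n - t)
  have hcover_le : ∀ B ∈ S, (T.filter (fun X => B ⊆ X)).card ≤ n - t := by
    intro B hB
    have hBc : B.card = t := hS.1 B hB
    have hsub : T.filter (fun X => B ⊆ X) ⊆
        (Finset.univ \ B).image (fun x => insert x B) := by
      intro X hX
      obtain ⟨hXT, hBX⟩ := Finset.mem_filter.mp hX
      have hXc : X.card = t + 1 := (Finset.mem_powersetCard.mp hXT).2
      have hXB : (X \ B).card = 1 := by
        have := Finset.card_sdiff_add_card_inter X B
        have : X ∩ B = B := Finset.inter_eq_right.mpr hBX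
        have h2 := Finset.card_sdiff_add_card_inter X B
        rw [this] at h2
        omega
      obtain ⟨x, hx⟩ := Finset.card_eq_one.mp hXB
      have hxX : x ∈ X ∧ x ∉ B := by
        have : x ∈ X \ B := hx ▸ Finset.mem_singleton_self x
        exact ⟨(Finset.mem_sdiff.mp this).1, (Finset.mem_sdiff.mp this).2⟩
      refine Finset.mem_image.mpr ⟨x, Finset.mem_sdiff.mpr ⟨Finset.mem_univ x, hxX.2⟩, ?_⟩
      apply Finset.eq_of_subset_of_card_le
      · intro y hy
        rcases Finset.mem_insert.mp hy with rfl | hyB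
        · exact hxX.1
        · exact hBX hyB
      · rw [Finset.card_insert_of_notMem hxX.2, hBc, hXc]
    calc (T.filter (fun X => B ⊆ X)).card
        ≤ ((Finset.univ \ B).image (fun x => insert x B)).card := Finset.card_le_card hsub
      _ ≤ (Finset.univ \ B).card := Finset.card_image_le
      _ = n - t := by rw [Finset.card_sdiff_of_subset (Finset.subset_univ B), Finset.card_univ,
            Fintype.card_fin, hBc]
  have hsum_deg : ∑ X ∈ T, deg X ≤ S.card * (n - t) := by
    have hswap : ∑ X ∈ T, deg X = ∑ B ∈ S, (T.filter (fun X => B ⊆ X)).card := by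
      simp only [hdeg, Finset.card_filter]
      rw [Finset.sum_comm]
    rw [hswap]
    calc ∑ B ∈ S, (T.filter (fun X => B ⊆ X)).card ≤ ∑ B ∈ S, (n - t) :=
          Finset.sum_le_sum hcover_le
      _ = S.card * (n - t) := by rw [Finset.sum_const, smul_eq_mul]
  -- partner function
  have hpart : ∀ B ∈ S, ∃ B', B' ∈ S ∧ (B \ B').card = 1 := by
    intro B hB
    have hBc : B.card = t := hS.1 B hB
    obtain ⟨B', hB', h1⟩ := hS.2 B (by omega) (by omega)
    exact ⟨B', hB', h1⟩
  set f : Finset (Fin n) → Finset (Fin n) := fun B =>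
    if hB : B ∈ S then B ∪ (hpart B hB).choose else ∅ with hf
  have hfspec : ∀ B ∈ S, f B ∈ T ∧ B ⊆ f B ∧ 2 ≤ deg (f B) := by
    intro B hB
    have hBc : B.card = t := hS.1 B hB
    obtain ⟨hB'S, hB'1⟩ := (hpart B hB).choose_spec
    set B' := (hpart B hB).choose
    have hB'c : B'.card = t := hS.1 B' hB'S
    have hfB : f B = B ∪ B' := by rw [hf]; simp [hB]; rfl
    have hcd : (B' \ B).card = 1 := by
      rw [Finset.card_sdiff_comm (by omega)]; exact hB'1
    have hfc : (f B).card = t + 1 := by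
      rw [hfB, Finset.union_comm, ← Finset.card_sdiff_add_card, hcd, hBc, Nat.add_comm]
    have hne : B ≠ B' := by
      intro h
      rw [← h, Finset.sdiff_self, Finset.card_empty] at hB'1
      omega
    have hmemT : f B ∈ T := Finset.mem_powersetCard.mpr ⟨Finset.subset_univ _, hfc⟩
    refine ⟨hmemT, by rw [hfB]; exact Finset.subset_union_left, ?_⟩
    have : {B, B'} ⊆ S.filter (fun C => C ⊆ f B) := by
      intro C hC
      rcases Finset.mem_insert.mp hC with rfl | hC'
      · exact Finset.mem_filter.mpr ⟨hB, by rw [hfB]; exact Finset.subset_union_left⟩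
      · rw [Finset.mem_singleton] at hC'
        subst hC'
        exact Finset.mem_filter.mpr ⟨hB'S, by rw [hfB]; exact Finset.subset_union_right⟩
    calc 2 = ({B, B'} : Finset (Finset (Fin n))).card := by
          rw [Finset.card_pair hne]
      _ ≤ deg (f B) := Finset.card_le_card this
  -- fiberwise counting
  have hfib : S.card = ∑ X ∈ T, (S.filter (fun B => f B = X)).card :=
    Finset.card_eq_sum_card_fiberwise (fun B hB => (hfspec B hB).1)
  have hpoint : ∀ X ∈ T,
      (S.filter (fun B => f B = X)).card + 2 ≤ 2 * deg X := by
    intro X hX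
    rcases Finset.eq_empty_or_nonempty (S.filter (fun B => f B = X)) with he | ⟨B, hB⟩
    · rw [he, Finset.card_empty]
      have := hdeg1 X hX
      omega
    · obtain ⟨hBS, hBf⟩ := Finset.mem_filter.mp hB
      have h2 : 2 ≤ deg X := hBf ▸ (hfspec B hBS).2.2
      have hle : (S.filter (fun B => f B = X)).card ≤ deg X := by
        apply Finset.card_le_card
        intro C hC
        obtain ⟨hCS, hCf⟩ := Finset.mem_filter.mp hC
        exact Finset.mem_filter.mpr ⟨hCS, hCf ▸ (hfspec C hCS).2.1⟩
      omega
  have hmain : S.card + 2 * T.card ≤ 2 * ∑ X ∈ T, deg X := by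
    calc S.card + 2 * T.card
        = ∑ X ∈ T, ((S.filter (fun B => f B = X)).card + 2) := by
          rw [Finset.sum_add_distrib, ← hfib, Finset.sum_const, smul_eq_mul]
          ring
      _ ≤ ∑ X ∈ T, 2 * deg X := Finset.sum_le_sum hpoint
      _ = 2 * ∑ X ∈ T, deg X := by rw [Finset.mul_sum]
  rw [hTcard] at hmain
  have := hsum_deg
  calc S.card + 2 * n.choose (t + 1) ≤ 2 * ∑ X ∈ T, deg X := hmain
    _ ≤ 2 * (S.card * (n - t)) := by omega
    _ = 2 * S.card * (n - t) := by ring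

theorem stmt18 (n t : ℕ) (ht : 0 < t) (htn : t + 1 < n) :
    (SENumber n t : ℝ) ≥
      (n.choose (t + 1) : ℝ) / ((n : ℝ) - t - (t : ℝ) / (n : ℝ) + 1 / 2) := by
  have hne : {m : ℕ | ∃ S : Finset (Finset (Fin n)), IsSESystem n t S ∧ S.card = m}.Nonempty := by
    obtain ⟨S, hS⟩ := exists_SESystem n t ht htn
    exact ⟨S.card, S, hS, rfl⟩
  obtain ⟨S, hS, hm⟩ := Nat.sInf_mem hne
  have hkey : S.card + 2 * n.choose (t + 1) ≤ 2 * S.card * (n - t) :=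
    key_count n t ht htn S hS
  -- cast to reals
  have htn' : t ≤ n := by omega
  set m := S.card with hmS
  have hgoal : SENumber n t = m := by rw [SENumber, ← hm]
  rw [hgoal]
  have hkeyR : (m : ℝ) + 2 * (n.choose (t + 1) : ℝ) ≤ 2 * m * ((n : ℝ) - t) := by
    have := Nat.cast_le (α := ℝ).mpr hkey
    push_cast [Nat.cast_sub htn'] at this
    linarith
  have hn0 : (0 : ℝ) < n := by exact_mod_cast (by omega : 0 < n)
  have htn2 : (t : ℝ) + 1 < n := by exact_mod_cast htn
  have ht0 : (0 : ℝ) < t := by exact_mod_cast ht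
  have hden2 : (0 : ℝ) < (n : ℝ) - t - 1 / 2 := by linarith
  have hdiv : (t : ℝ) / n < 1 := by
    rw [div_lt_one hn0]; linarith
  have hden1 : (0 : ℝ) < (n : ℝ) - t - (t : ℝ) / n + 1 / 2 := by linarith
  rw [ge_iff_le, div_le_iff₀ hden1]
  have hm0 : (0 : ℝ) ≤ m := Nat.cast_nonneg m
  have step1 : (n.choose (t + 1) : ℝ) ≤ m * ((n : ℝ) - t - 1 / 2) := by linarith
  have step2 : (m : ℝ) * ((n : ℝ) - t - 1 / 2) ≤ m * ((n : ℝ) - t - (t : ℝ) / n + 1 / 2) := by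
    apply mul_le_mul_of_nonneg_left _ hm0
    linarith
  linarith
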